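/- Let G = (V, E) be a finite multigraph on n vertices and c : E → [n−1] an edge coloring. Then G contains a spanning tree whose n−1 edges receive pairwise distinct colors if and only if for every k ∈ [n] and every partition of V into k nonempty classes, the edges of G joining two different classes use at least k−1 distinct colors. -/

import Mathlib

attribute [local instance] Classical.propDecidable

namespace Stmt18Aux

lemma sym2_rep {V : Type*} (z : Sym2 V) : ∃ u v, z = s(u, v) := by
  induction z using Sym2.ind with
  | _ u v => exact ⟨u, v, rfl⟩

variable {V E : Type*} [Fintype V] [Fintype E] [DecidableEq V]

instance (G : SimpleGraph V) : Finite G.ConnectedComponent := Quot.finite _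

variable (ends : E → Sym2 V)

/-- The simple graph induced by a set of multigraph edges. -/
def Gr (A : Finset E) : SimpleGraph V := SimpleGraph.fromEdgeSet (ends '' ↑A)

lemma Gr_adj {A : Finset E} {a b : V} :
    (Gr ends A).Adj a b ↔ (∃ e ∈ A, ends e = s(a, b)) ∧ a ≠ b := by
  simp [Gr, SimpleGraph.fromEdgeSet_adj]

/-- Number of connected components of the graph induced by `A`. -/
noncomputable def ncomp (A : Finset E) : ℕ := Nat.card (Gr ends A).ConnectedComponent

lemma Gr_mono {A B : Finset E} (h : A ⊆ B) : Gr ends A ≤ Gr ends B :=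
  SimpleGraph.fromEdgeSet_mono (Set.image_mono (by exact_mod_cast h))

lemma reach_mono {A B : Finset E} (h : A ⊆ B) {a b : V}
    (hr : (Gr ends A).Reachable a b) : (Gr ends B).Reachable a b :=
  hr.mono (Gr_mono ends h)

/-- The canonical map on connected components induced by a subrelation of reachability. -/
def ccMap {A B : Finset E}
    (h : ∀ a b : V, (Gr ends A).Reachable a b → (Gr ends B).Reachable a b) :
    (Gr ends A).ConnectedComponent → (Gr ends B).ConnectedComponent :=
  Quot.map id h

lemma ccMap_mk {A B : Finset E}
    (h : ∀ a b : V, (Gr ends A).Reachable a b → (Gr ends B).Reachable a b) (v : V) :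
    ccMap ends h ((Gr ends A).connectedComponentMk v) = (Gr ends B).connectedComponentMk v := rfl

lemma ccMap_surj {A B : Finset E}
    (h : ∀ a b : V, (Gr ends A).Reachable a b → (Gr ends B).Reachable a b) :
    Function.Surjective (ccMap ends h) := by
  intro x
  induction x using SimpleGraph.ConnectedComponent.ind with
  | _ v => exact ⟨(Gr ends A).connectedComponentMk v, rfl⟩

lemma ncomp_mono {A B : Finset E} (h : A ⊆ B) : ncomp ends B ≤ ncomp ends A :=
  Nat.card_le_card_of_surjective _ (ccMap_surj ends (fun _ _ => reach_mono ends h))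

/-- Key walk decomposition lemma: reachability after inserting one edge. -/
lemma reach_insert {A : Finset E} {e : E} {u v : V} (he : ends e = s(u, v)) :
    ∀ {a b : V}, (Gr ends (insert e A)).Reachable a b →
      (Gr ends A).Reachable a b ∨
      ((Gr ends A).Reachable a u ∧ (Gr ends A).Reachable v b) ∨
      ((Gr ends A).Reachable a v ∧ (Gr ends A).Reachable u b) := by
  intro a b hab
  obtain ⟨w⟩ := hab
  induction w with
  | nil => exact Or.inl (SimpleGraph.Reachable.refl _)
  | @cons a x b hax p ih =>
    obtain ⟨⟨f, hf, hfe⟩, hne⟩ := (Gr_adj ends).mp hax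
    rcases Finset.mem_insert.mp hf with hfA | hfA
    · -- f = e : the new edge
      subst hfA
      rw [he] at hfe
      rcases Sym2.eq_iff.mp hfe with ⟨hu, hv⟩ | ⟨hu, hv⟩
      · -- u = a, v = x
        subst hu; subst hv
        rcases ih with h | ⟨h1, h2⟩ | ⟨h1, h2⟩
        · exact Or.inr (Or.inl ⟨SimpleGraph.Reachable.refl _, h⟩)
        · exact Or.inr (Or.inl ⟨SimpleGraph.Reachable.refl _, h2⟩)
        · exact Or.inl h2
      · -- u = x, v = a
        subst hu; subst hv
        rcases ih with h | ⟨h1, h2⟩ | ⟨h1, h2⟩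
        · exact Or.inr (Or.inr ⟨SimpleGraph.Reachable.refl _, h⟩)
        · exact Or.inl h2
        · exact Or.inr (Or.inr ⟨SimpleGraph.Reachable.refl _, h2⟩)
    · -- f ∈ A
      have hA : (Gr ends A).Adj a x := (Gr_adj ends).mpr ⟨⟨f, hfA, hfe⟩, hne⟩
      rcases ih with h | ⟨h1, h2⟩ | ⟨h1, h2⟩
      · exact Or.inl (hA.reachable.trans h)
      · exact Or.inr (Or.inl ⟨hA.reachable.trans h1, h2⟩)
      · exact Or.inr (Or.inr ⟨hA.reachable.trans h1, h2⟩)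

/-- Inserting an edge whose endpoints are already connected (or a loop) does not change
the number of components. -/
lemma ncomp_insert_eq {A : Finset E} {e : E} {u v : V} (he : ends e = s(u, v))
    (h : u = v ∨ (Gr ends A).Reachable u v) :
    ncomp ends (insert e A) = ncomp ends A := by
  have key : ∀ a b : V, (Gr ends (insert e A)).Reachable a b → (Gr ends A).Reachable a b := by
    intro a b hr
    have huv : (Gr ends A).Reachable u v := by
      rcases h with h | h
      · subst h; exact SimpleGraph.Reachable.refl _
      · exact h
    rcases reach_insert ends he hr with h' | ⟨h1, h2⟩ | ⟨h1, h2⟩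
    · exact h'
    · exact (h1.trans huv).trans h2
    · exact (h1.trans huv.symm).trans h2
  have hsub : A ⊆ insert e A := Finset.subset_insert e A
  set ψ := ccMap ends (fun a b => reach_mono ends hsub) with hψ
  have hinj : Function.Injective ψ := by
    intro x y
    induction x using SimpleGraph.ConnectedComponent.ind with | _ a =>
    induction y using SimpleGraph.ConnectedComponent.ind with | _ b =>
    intro hxy
    rw [hψ, ccMap_mk, ccMap_mk] at hxy
    exact SimpleGraph.ConnectedComponent.sound
      (key a b (SimpleGraph.ConnectedComponent.exact hxy))
  exact (Nat.card_congr (Equiv.ofBijective ψ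
    ⟨hinj, ccMap_surj ends (fun a b => reach_mono ends hsub)⟩)).symm

/-- Inserting an edge joining two distinct components decreases the count by exactly one. -/
lemma ncomp_insert_merge {A : Finset E} {e : E} {u v : V} (he : ends e = s(u, v))
    (hne : u ≠ v) (hnr : ¬ (Gr ends A).Reachable u v) :
    ncomp ends A = ncomp ends (insert e A) + 1 := by
  have hsub : A ⊆ insert e A := Finset.subset_insert e A
  set ψ := ccMap ends (fun a b => reach_mono ends hsub) with hψ
  set cu := (Gr ends A).connectedComponentMk u with hcu
  set cv := (Gr ends A).connectedComponentMk v with hcv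
  have hcune : cu ≠ cv := fun h => hnr (SimpleGraph.ConnectedComponent.exact h)
  have hadj : (Gr ends (insert e A)).Adj u v :=
    (Gr_adj ends).mpr ⟨⟨e, Finset.mem_insert_self e A, he⟩, hne⟩
  have hψuv : ψ cu = ψ cv := by
    rw [hψ, hcu, hcv, ccMap_mk, ccMap_mk]
    exact SimpleGraph.ConnectedComponent.sound hadj.reachable
  have hψalmost : ∀ x y, ψ x = ψ y → x = y ∨ (x = cu ∧ y = cv) ∨ (x = cv ∧ y = cu) := by
    intro x y
    induction x using SimpleGraph.ConnectedComponent.ind with | _ a =>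
    induction y using SimpleGraph.ConnectedComponent.ind with | _ b =>
    intro hxy
    rw [hψ, ccMap_mk, ccMap_mk] at hxy
    have hr := SimpleGraph.ConnectedComponent.exact hxy
    rcases reach_insert ends he hr with h' | ⟨h1, h2⟩ | ⟨h1, h2⟩
    · exact Or.inl (SimpleGraph.ConnectedComponent.sound h')
    · exact Or.inr (Or.inl ⟨SimpleGraph.ConnectedComponent.sound h1,
        (SimpleGraph.ConnectedComponent.sound h2).symm⟩)
    · exact Or.inr (Or.inr ⟨SimpleGraph.ConnectedComponent.sound h1,
        (SimpleGraph.ConnectedComponent.sound h2).symm⟩)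
  -- the restriction of ψ to the complement of {cv} is a bijection
  set ψ' : {x : (Gr ends A).ConnectedComponent // x ≠ cv} →
      (Gr ends (insert e A)).ConnectedComponent := fun x => ψ x.1 with hψ'
  have hinj : Function.Injective ψ' := by
    rintro ⟨x, hx⟩ ⟨y, hy⟩ hxy
    rcases hψalmost x y hxy with h | ⟨h1, h2⟩ | ⟨h1, h2⟩
    · exact Subtype.ext h
    · exact absurd h2 hy
    · exact absurd h1 hx
  have hsurj : Function.Surjective ψ' := by
    intro z
    obtain ⟨w, hw⟩ := ccMap_surj ends (fun a b => reach_mono ends hsub) z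
    by_cases hwv : w = cv
    · refine ⟨⟨cu, hcune⟩, ?_⟩
      show ψ cu = z
      rw [hψuv, ← hwv]
      exact hw
    · exact ⟨⟨w, hwv⟩, hw⟩
  have hcard : Nat.card {x : (Gr ends A).ConnectedComponent // x ≠ cv} =
      Nat.card (Gr ends (insert e A)).ConnectedComponent :=
    Nat.card_congr (Equiv.ofBijective ψ' ⟨hinj, hsurj⟩)
  letI : Fintype (Gr ends A).ConnectedComponent := Fintype.ofFinite _
  have h1 : Nat.card {x : (Gr ends A).ConnectedComponent // x ≠ cv} =
      Nat.card (Gr ends A).ConnectedComponent - 1 := by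
    rw [Nat.card_eq_fintype_card, Nat.card_eq_fintype_card]
    have := Fintype.card_subtype_compl (fun x : (Gr ends A).ConnectedComponent => x = cv)
    rw [Fintype.card_subtype_eq] at this
    convert this using 2
  have hpos : 1 ≤ Nat.card (Gr ends A).ConnectedComponent := by
    have : Nonempty (Gr ends A).ConnectedComponent := ⟨cv⟩
    exact Nat.card_pos
  unfold ncomp
  omega

lemma ncomp_le_insert_add_one (A : Finset E) (e : E) :
    ncomp ends A ≤ ncomp ends (insert e A) + 1 := by
  obtain ⟨u, v, he⟩ := sym2_rep (ends e)
  by_cases h : u = v ∨ (Gr ends A).Reachable u v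
  · rw [ncomp_insert_eq ends he h]; omega
  · push_neg at h
    rw [ncomp_insert_merge ends he h.1 h.2]

lemma local_supermod {A B : Finset E} (h : A ⊆ B) (e : E) :
    ncomp ends (insert e A) + ncomp ends B ≤ ncomp ends A + ncomp ends (insert e B) := by
  obtain ⟨u, v, he⟩ := sym2_rep (ends e)
  by_cases h1 : u = v ∨ (Gr ends A).Reachable u v
  · have h2 : u = v ∨ (Gr ends B).Reachable u v := h1.imp id (reach_mono ends h)
    rw [ncomp_insert_eq ends he h1, ncomp_insert_eq ends he h2]
  · push_neg at h1
    have hm := ncomp_insert_merge ends he h1.1 h1.2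
    have hb := ncomp_le_insert_add_one ends B e
    omega

lemma global_supermod {A B : Finset E} (h : A ⊆ B) (S : Finset E) :
    ncomp ends (A ∪ S) + ncomp ends B ≤ ncomp ends A + ncomp ends (B ∪ S) := by
  induction S using Finset.induction_on with
  | empty => simp
  | @insert f S hf ih =>
    have h1 := local_supermod ends
      (Finset.union_subset_union h (Finset.Subset.refl S)) f
    rw [Finset.union_insert, Finset.union_insert]
    omega

lemma supermod (X Y : Finset E) :
    ncomp ends X + ncomp ends Y ≤ ncomp ends (X ∩ Y) + ncomp ends (X ∪ Y) := by
  have h := global_supermod ends (Finset.inter_subset_left (s₁ := X) (s₂ := Y)) Y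
  rw [Finset.union_eq_right.mpr (Finset.inter_subset_right (s₁ := X) (s₂ := Y))] at h
  omega

lemma ncomp_empty : ncomp ends (∅ : Finset E) = Fintype.card V := by
  have hbot : Gr ends (∅ : Finset E) = ⊥ := by
    simp [Gr]
  rw [ncomp, hbot]
  have : (⊥ : SimpleGraph V).ConnectedComponent ≃ V := by
    refine ⟨SimpleGraph.ConnectedComponent.lift id
      (fun v w p _ => SimpleGraph.reachable_bot.mp ⟨p⟩),
      (⊥ : SimpleGraph V).connectedComponentMk, ?_, fun v => rfl⟩
    intro x
    induction x using SimpleGraph.ConnectedComponent.ind with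
    | _ v => rfl
  rw [Nat.card_congr this, Nat.card_eq_fintype_card]

lemma ncomp_le_union_add_card (A S : Finset E) :
    ncomp ends A ≤ ncomp ends (A ∪ S) + S.card := by
  induction S using Finset.induction_on with
  | empty => simp
  | @insert f S hf ih =>
    have h1 := ncomp_le_insert_add_one ends (A ∪ S) f
    rw [Finset.union_insert, Finset.card_insert_of_notMem hf]
    omega

lemma ncomp_pos [Nonempty V] (A : Finset E) : 1 ≤ ncomp ends A := by
  have : Nonempty (Gr ends A).ConnectedComponent :=
    ⟨(Gr ends A).connectedComponentMk (Classical.arbitrary V)⟩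
  exact Nat.card_pos

lemma ncomp_le_card (A : Finset E) : ncomp ends A ≤ Fintype.card V := by
  rw [← ncomp_empty ends]
  exact ncomp_mono ends (Finset.empty_subset A)

lemma connected_of_ncomp_le_one [Nonempty V] {A : Finset E}
    (h : ncomp ends A ≤ 1) : (Gr ends A).Connected := by
  have h1 : ncomp ends A = 1 := le_antisymm h (ncomp_pos ends A)
  have hsub : Subsingleton (Gr ends A).ConnectedComponent :=
    (Nat.card_eq_one_iff_unique.mp h1).1
  constructor
  intro a b
  exact SimpleGraph.ConnectedComponent.exact
    (Subsingleton.elim ((Gr ends A).connectedComponentMk a) ((Gr ends A).connectedComponentMk b))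

lemma ncomp_eq_one_of_connected {A : Finset E}
    (h : (Gr ends A).Connected) : ncomp ends A = 1 := by
  refine Nat.card_eq_one_iff_unique.mpr ⟨⟨?_⟩, ?_⟩
  · exact SimpleGraph.ConnectedComponent.ind₂
      (fun v w => SimpleGraph.ConnectedComponent.sound (h.preconnected v w))
  · have : Nonempty V := h.nonempty
    exact ⟨(Gr ends A).connectedComponentMk (Classical.arbitrary V)⟩

/-- Rado-type theorem for the graphic matroid of a multigraph: if every union of color
classes indexed by `K` spans at least `|K|` in rank, then there is an independent
transversal. -/
lemma rado {ι : Type*} [Fintype ι] (A : ι → Finset E)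
    (h : ∀ K : Finset ι, K.card + ncomp ends (K.biUnion A) ≤ Fintype.card V) :
    ∃ f : ι → E, Function.Injective f ∧ (∀ i, f i ∈ A i) ∧
      Fintype.card ι + ncomp ends (Finset.univ.image f) ≤ Fintype.card V := by
  classical
  generalize hN : (∑ i, (A i).card) = N
  induction N using Nat.strong_induction_on generalizing A with
  | _ N IH =>
  by_cases hall : ∀ i, (A i).card ≤ 1
  · -- base case: all classes are singletons
    have hne : ∀ i, ∃ x, A i = {x} := by
      intro i
      have h1 := h {i}
      rw [Finset.singleton_biUnion, Finset.card_singleton] at h1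
      have hnonempty : (A i).Nonempty := by
        by_contra hemp
        rw [Finset.not_nonempty_iff_eq_empty] at hemp
        rw [hemp, ncomp_empty ends] at h1
        omega
      exact Finset.card_eq_one.mp (le_antisymm (hall i) hnonempty.card_pos)
    choose g hg using hne
    have hmem : ∀ i, g i ∈ A i := fun i => (hg i).symm ▸ Finset.mem_singleton_self (g i)
    have hinj : Function.Injective g := by
      intro i j hij
      by_contra hijne
      have h2 := h {i, j}
      rw [Finset.biUnion_insert, Finset.singleton_biUnion, hg i, hg j, hij,
        Finset.union_idempotent] at h2
      have hc2 : ({i, j} : Finset ι).card = 2 := Finset.card_pair hijne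
      have h3 : ncomp ends (∅ : Finset E) ≤ ncomp ends (insert (g j) ∅) + 1 :=
        ncomp_le_insert_add_one ends ∅ (g j)
      rw [ncomp_empty ends] at h3
      have h4 : ({g j} : Finset E) = insert (g j) ∅ := rfl
      rw [hc2, h4] at h2
      omega
    refine ⟨g, hinj, hmem, ?_⟩
    have huniv := h Finset.univ
    have himg : Finset.univ.biUnion A = Finset.univ.image g := by
      ext z
      simp only [Finset.mem_biUnion, Finset.mem_univ, true_and, Finset.mem_image]
      constructor
      · rintro ⟨i, hi⟩
        rw [hg i, Finset.mem_singleton] at hi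
        exact ⟨i, hi.symm⟩
      · rintro ⟨i, hi⟩
        exact ⟨i, by rw [hg i, Finset.mem_singleton, hi]⟩
    rw [himg, Finset.card_univ] at huniv
    exact huniv
  · -- inductive step
    push_neg at hall
    obtain ⟨i0, hi0⟩ := hall
    obtain ⟨x, hx, y, hy, hxy⟩ := Finset.one_lt_card.mp hi0
    set A1 := Function.update A i0 (A i0 \ {x}) with hA1
    set A2 := Function.update A i0 (A i0 \ {y}) with hA2
    have hsum : ∀ z ∈ A i0, (∑ i, ((Function.update A i0 (A i0 \ {z})) i).card) < N := by
      intro z hz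
      rw [← hN]
      have hsplit : ∀ B : ι → Finset E,
          ∑ i, (B i).card = (∑ i ∈ Finset.univ.erase i0, (B i).card) + (B i0).card :=
        fun B => (Finset.sum_erase_add Finset.univ _ (Finset.mem_univ i0)).symm
      rw [hsplit (Function.update A i0 (A i0 \ {z})), hsplit A]
      have hcongr : ∑ i ∈ Finset.univ.erase i0, ((Function.update A i0 (A i0 \ {z})) i).card
          = ∑ i ∈ Finset.univ.erase i0, (A i).card :=
        Finset.sum_congr rfl (fun j hj => by
          rw [Function.update_of_ne (Finset.ne_of_mem_erase hj)])
      rw [hcongr, Function.update_self]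
      have hcz : (A i0 \ {z}).card = (A i0).card - 1 := by
        rw [Finset.card_sdiff_of_subset (Finset.singleton_subset_iff.mpr hz), Finset.card_singleton]
      omega
    have hAsub : ∀ i z, (Function.update A i0 (A i0 \ {z})) i ⊆ A i := by
      intro i z
      by_cases hi : i = i0
      · subst hi; rw [Function.update_self]; exact Finset.sdiff_subset
      · rw [Function.update_of_ne hi]
    by_cases hc1 : ∀ K : Finset ι, K.card + ncomp ends (K.biUnion A1) ≤ Fintype.card V
    · obtain ⟨f, hf1, hf2, hf3⟩ := IH _ (hsum x hx) A1 hc1 rfl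
      exact ⟨f, hf1, fun i => hAsub i x (hf2 i), hf3⟩
    by_cases hc2 : ∀ K : Finset ι, K.card + ncomp ends (K.biUnion A2) ≤ Fintype.card V
    · obtain ⟨f, hf1, hf2, hf3⟩ := IH _ (hsum y hy) A2 hc2 rfl
      exact ⟨f, hf1, fun i => hAsub i y (hf2 i), hf3⟩
    exfalso
    push_neg at hc1 hc2
    obtain ⟨K1, hK1⟩ := hc1
    obtain ⟨K2, hK2⟩ := hc2
    have hi0K1 : i0 ∈ K1 := by
      by_contra hK
      have heq : K1.biUnion A1 = K1.biUnion A := Finset.biUnion_congr rfl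
        (fun j hj => by
          rw [hA1]
          exact Function.update_of_ne (fun hji => hK (by rw [← hji]; exact hj)) _ _)
      have hh := h K1
      rw [heq] at hK1
      omega
    have hi0K2 : i0 ∈ K2 := by
      by_contra hK
      have heq : K2.biUnion A2 = K2.biUnion A := Finset.biUnion_congr rfl
        (fun j hj => by
          rw [hA2]
          exact Function.update_of_ne (fun hji => hK (by rw [← hji]; exact hj)) _ _)
      have hh := h K2
      rw [heq] at hK2
      omega
    set J1 := K1.erase i0 with hJ1
    set J2 := K2.erase i0 with hJ2
    set X := K1.biUnion A1 with hX
    set Y := K2.biUnion A2 with hY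
    set U := (insert i0 (J1 ∪ J2)).biUnion A with hU
    set W := (J1 ∩ J2).biUnion A with hW
    -- U ⊆ X ∪ Y
    have hUXY : U ⊆ X ∪ Y := by
      intro z hz
      rw [hU, Finset.mem_biUnion] at hz
      obtain ⟨j, hj, hzj⟩ := hz
      rcases Finset.mem_insert.mp hj with hj0 | hjJ
      · subst hj0
        by_cases hzx : z = x
        · refine Finset.mem_union_right _ ?_
          rw [hY, Finset.mem_biUnion]
          refine ⟨j, hi0K2, ?_⟩
          rw [hA2, Function.update_self, Finset.mem_sdiff, Finset.mem_singleton]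
          exact ⟨hzj, fun hzy => hxy (hzx ▸ hzy ▸ rfl)⟩
        · refine Finset.mem_union_left _ ?_
          rw [hX, Finset.mem_biUnion]
          refine ⟨j, hi0K1, ?_⟩
          rw [hA1, Function.update_self, Finset.mem_sdiff, Finset.mem_singleton]
          exact ⟨hzj, hzx⟩
      · rcases Finset.mem_union.mp hjJ with hjJ1 | hjJ2
        · refine Finset.mem_union_left _ ?_
          rw [hX, Finset.mem_biUnion]
          refine ⟨j, Finset.mem_of_mem_erase hjJ1, ?_⟩
          rw [hA1, Function.update_of_ne (Finset.ne_of_mem_erase hjJ1)]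
          exact hzj
        · refine Finset.mem_union_right _ ?_
          rw [hY, Finset.mem_biUnion]
          refine ⟨j, Finset.mem_of_mem_erase hjJ2, ?_⟩
          rw [hA2, Function.update_of_ne (Finset.ne_of_mem_erase hjJ2)]
          exact hzj
    -- W ⊆ X ∩ Y
    have hWXY : W ⊆ X ∩ Y := by
      intro z hz
      rw [hW, Finset.mem_biUnion] at hz
      obtain ⟨j, hj, hzj⟩ := hz
      have hj1 : j ∈ J1 := Finset.mem_of_mem_inter_left hj
      have hj2 : j ∈ J2 := Finset.mem_of_mem_inter_right hj
      rw [Finset.mem_inter]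
      constructor
      · rw [hX, Finset.mem_biUnion]
        refine ⟨j, Finset.mem_of_mem_erase hj1, ?_⟩
        rw [hA1, Function.update_of_ne (Finset.ne_of_mem_erase hj1)]
        exact hzj
      · rw [hY, Finset.mem_biUnion]
        refine ⟨j, Finset.mem_of_mem_erase hj2, ?_⟩
        rw [hA2, Function.update_of_ne (Finset.ne_of_mem_erase hj2)]
        exact hzj
    have a3 := supermod ends X Y
    have a4 := h (insert i0 (J1 ∪ J2))
    rw [← hU] at a4
    have a5 := h (J1 ∩ J2)
    rw [← hW] at a5
    have a6 : ncomp ends (X ∪ Y) ≤ ncomp ends U := ncomp_mono ends hUXY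
    have a7 : ncomp ends (X ∩ Y) ≤ ncomp ends W := ncomp_mono ends hWXY
    have a8 : K1.card = J1.card + 1 := by
      rw [hJ1]
      have := Finset.card_erase_add_one hi0K1
      omega
    have a9 : K2.card = J2.card + 1 := by
      rw [hJ2]
      have := Finset.card_erase_add_one hi0K2
      omega
    have a10 := Finset.card_union_add_card_inter J1 J2
    have a11 : (insert i0 (J1 ∪ J2)).card = (J1 ∪ J2).card + 1 := by
      rw [Finset.card_insert_of_notMem]
      simp [hJ1, hJ2]
    rw [a11] at a4
    omega

/-- The class of vertex `v` among the connected components of the graph on `A`. -/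
noncomputable def cls (A : Finset E) (v : V) : Finset V :=
  Finset.univ.filter fun w => (Gr ends A).Reachable v w

lemma mem_cls {A : Finset E} {v w : V} :
    w ∈ cls ends A v ↔ (Gr ends A).Reachable v w := by
  simp [cls]

lemma cls_eq_of_reach {A : Finset E} {v w : V} (h : (Gr ends A).Reachable v w) :
    cls ends A v = cls ends A w := by
  ext z
  rw [mem_cls, mem_cls]
  exact ⟨fun h2 => h.symm.trans h2, fun h2 => h.trans h2⟩

lemma card_image_cls (A : Finset E) :
    (Finset.univ.image (cls ends A)).card = ncomp ends A := by
  classical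
  letI : Fintype (Gr ends A).ConnectedComponent := Fintype.ofFinite _
  set g : (Gr ends A).ConnectedComponent → Finset V :=
    Quot.lift (cls ends A) (fun a b hab => cls_eq_of_reach ends hab) with hg
  have hmk : ∀ v : V, g ((Gr ends A).connectedComponentMk v) = cls ends A v := fun v => rfl
  have hginj : Function.Injective g := by
    intro x y
    induction x using SimpleGraph.ConnectedComponent.ind with | _ a =>
    induction y using SimpleGraph.ConnectedComponent.ind with | _ b =>
    intro hxy
    rw [hmk, hmk] at hxy
    have hb : b ∈ cls ends A a := hxy ▸ (mem_cls ends).mpr (SimpleGraph.Reachable.refl b)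
    exact SimpleGraph.ConnectedComponent.sound ((mem_cls ends).mp hb)
  have himg : Finset.univ.image (cls ends A) = Finset.univ.image g := by
    rw [← Finset.image_univ_of_surjective
      (f := (Gr ends A).connectedComponentMk) (fun x => x.exists_rep),
      Finset.image_image]
    rfl
  rw [himg, Finset.card_image_of_injective _ hginj, Finset.card_univ, ncomp,
    Nat.card_eq_fintype_card]

/-- If the edges of `A` all live inside blocks of `P`, then `P` has at most as many
blocks as the graph on `A` has components. -/
lemma card_le_ncomp (A : Finset E) (P : Finset (Finset V)) (blk : V → Finset V)
    (hblkP : ∀ v, blk v ∈ P) (hblkmem : ∀ v, v ∈ blk v)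
    (huniq : ∀ v W, W ∈ P → v ∈ W → W = blk v)
    (hne : ∀ W ∈ P, W.Nonempty)
    (hedges : ∀ f ∈ A, ∃ W ∈ P, ∀ v ∈ ends f, v ∈ W) :
    P.card ≤ ncomp ends A := by
  have hreach : ∀ a b : V, (Gr ends A).Reachable a b → blk a = blk b := by
    intro a b hab
    obtain ⟨w⟩ := hab
    induction w with
    | nil => rfl
    | @cons a x b hax p ih =>
      obtain ⟨⟨f, hf, hfe⟩, hnex⟩ := (Gr_adj ends).mp hax
      obtain ⟨W, hW, hWall⟩ := hedges f hf
      have ha : a ∈ W := hWall a (by rw [hfe]; exact Sym2.mem_mk_left a x)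
      have hx : x ∈ W := hWall x (by rw [hfe]; exact Sym2.mem_mk_right a x)
      have h1 : W = blk a := huniq a W hW ha
      have h2 : W = blk x := huniq x W hW hx
      rw [← h1, h2]
      exact ih
  set σ : (Gr ends A).ConnectedComponent → {W // W ∈ P} :=
    Quot.lift (fun v => (⟨blk v, hblkP v⟩ : {W // W ∈ P}))
      (fun a b hab => Subtype.ext (hreach a b hab)) with hσ
  have hσmk : ∀ v : V, σ ((Gr ends A).connectedComponentMk v) = ⟨blk v, hblkP v⟩ :=
    fun v => rfl
  have hsurj : Function.Surjective σ := by
    rintro ⟨W, hW⟩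
    obtain ⟨v, hv⟩ := hne W hW
    exact ⟨(Gr ends A).connectedComponentMk v,
      by rw [hσmk]; exact Subtype.ext (huniq v W hW hv).symm⟩
  calc P.card = Nat.card {W // W ∈ P} := by
        rw [Nat.card_eq_fintype_card, Fintype.card_coe]
    _ ≤ Nat.card (Gr ends A).ConnectedComponent := Nat.card_le_card_of_surjective σ hsurj
    _ = ncomp ends A := rfl

end Stmt18Aux

open Stmt18Aux in
/-- A multigraph on vertex set `V` is given by an edge index type `E` together with
an endpoints map `ends : E → Sym2 V`; `c` colors the edges with `n - 1` colors.
The graph has a rainbow spanning tree iff every partition of `V` into `k` nonempty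
classes is crossed by edges of at least `k - 1` distinct colors. -/
theorem stmt_18 {V E : Type*} [Fintype V] [Fintype E] [DecidableEq V]
    (n : ℕ) (hn : 1 ≤ n) (hV : Fintype.card V = n)
    (ends : E → Sym2 V) (c : E → Fin (n - 1)) :
    (∃ T : Finset E, T.card = n - 1 ∧ Set.InjOn c ↑T ∧
        (SimpleGraph.fromEdgeSet (ends '' ↑T)).Connected)
      ↔
    (∀ P : Finset (Finset V), (∀ v : V, ∃! W, W ∈ P ∧ v ∈ W) → (∀ W ∈ P, W.Nonempty) →
        P.card - 1 ≤
          ((Finset.univ.filter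
            (fun e : E => ∀ W ∈ P, ¬ (∀ v ∈ ends e, v ∈ W))).image c).card) := by
  classical
  have hVne : Nonempty V := by
    rw [← Fintype.card_pos_iff, hV]; omega
  constructor
  · rintro ⟨T, hTcard, hTinj, hTconn⟩ P hP hPne
    choose blk hblk huniq using fun v => hP v
    have hblkP : ∀ v, blk v ∈ P := fun v => (hblk v).1
    have hblkmem : ∀ v, v ∈ blk v := fun v => (hblk v).2
    have huniq' : ∀ v W, W ∈ P → v ∈ W → W = blk v := fun v W h1 h2 => huniq v W ⟨h1, h2⟩
    set TX := T.filter (fun e : E => ∀ W ∈ P, ¬ (∀ v ∈ ends e, v ∈ W)) with hTX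
    have hTXsub : TX ⊆ T := Finset.filter_subset _ _
    have h1 : P.card ≤ ncomp ends (T \ TX) := by
      refine card_le_ncomp ends (T \ TX) P blk hblkP hblkmem huniq' hPne ?_
      intro f hf
      rw [Finset.mem_sdiff] at hf
      have : ¬ (∀ W ∈ P, ¬ (∀ v ∈ ends f, v ∈ W)) := by
        intro hcr
        exact hf.2 (Finset.mem_filter.mpr ⟨hf.1, hcr⟩)
      push_neg at this
      obtain ⟨W, hW, hWall⟩ := this
      exact ⟨W, hW, hWall⟩
    have h2 : ncomp ends (T \ TX) ≤ ncomp ends T + TX.card := by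
      have h := ncomp_le_union_add_card ends (T \ TX) TX
      rwa [Finset.sdiff_union_of_subset hTXsub] at h
    have h3 : ncomp ends T = 1 := ncomp_eq_one_of_connected ends hTconn
    have h4 : TX.card = (TX.image c).card :=
      (Finset.card_image_of_injOn (hTinj.mono (by exact_mod_cast hTXsub))).symm
    have h5 : TX.image c ⊆
        (Finset.univ.filter (fun e : E => ∀ W ∈ P, ¬ (∀ v ∈ ends e, v ∈ W))).image c := by
      apply Finset.image_subset_image
      intro e he
      rw [hTX, Finset.mem_filter] at he
      exact Finset.mem_filter.mpr ⟨Finset.mem_univ e, he.2⟩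
    have h6 := Finset.card_le_card h5
    omega
  · intro hcond
    set A : Fin (n - 1) → Finset E :=
      fun i => Finset.univ.filter (fun e => c e = i) with hA
    have hR : ∀ K : Finset (Fin (n - 1)),
        K.card + ncomp ends (K.biUnion A) ≤ Fintype.card V := by
      intro K
      set AK := K.biUnion A with hAK
      set P := Finset.univ.image (cls ends AK) with hPdef
      have hmemP : ∀ v : V, cls ends AK v ∈ P := fun v =>
        Finset.mem_image_of_mem _ (Finset.mem_univ v)
      have hexu : ∀ v : V, ∃! W, W ∈ P ∧ v ∈ W := by
        intro v
        refine ⟨cls ends AK v, ⟨hmemP v, (mem_cls ends).mpr (SimpleGraph.Reachable.refl v)⟩, ?_⟩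
        rintro W ⟨hWP, hvW⟩
        rw [hPdef, Finset.mem_image] at hWP
        obtain ⟨w, _, hw⟩ := hWP
        rw [← hw] at hvW ⊢
        exact cls_eq_of_reach ends ((mem_cls ends).mp hvW)
      have hne : ∀ W ∈ P, W.Nonempty := by
        intro W hW
        rw [hPdef, Finset.mem_image] at hW
        obtain ⟨w, _, hw⟩ := hW
        exact ⟨w, hw ▸ (mem_cls ends).mpr (SimpleGraph.Reachable.refl w)⟩
      have hmain := hcond P hexu hne
      have hPcard : P.card = ncomp ends AK := card_image_cls ends AK
      -- crossing edges have colors outside K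
      have hsub : (Finset.univ.filter
          (fun e : E => ∀ W ∈ P, ¬ (∀ v ∈ ends e, v ∈ W))).image c ⊆ Kᶜ := by
        intro i hi
        rw [Finset.mem_image] at hi
        obtain ⟨e, he, hce⟩ := hi
        rw [Finset.mem_filter] at he
        rw [Finset.mem_compl]
        intro hiK
        have heAK : e ∈ AK := by
          rw [hAK, Finset.mem_biUnion]
          exact ⟨i, hiK, by rw [hA]; exact Finset.mem_filter.mpr ⟨Finset.mem_univ e, hce⟩⟩
        obtain ⟨u, v, huv⟩ := sym2_rep (ends e)
        refine he.2 (cls ends AK u) (hmemP u) ?_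
        intro w hw
        rw [huv, Sym2.mem_iff] at hw
        rcases hw with hw | hw
        · rw [hw]; exact (mem_cls ends).mpr (SimpleGraph.Reachable.refl u)
        · rw [hw]
          by_cases huveq : u = v
          · rw [← huveq]; exact (mem_cls ends).mpr (SimpleGraph.Reachable.refl u)
          · exact (mem_cls ends).mpr
              ((Gr_adj ends).mpr ⟨⟨e, heAK, huv⟩, huveq⟩).reachable
      have h7 := Finset.card_le_card hsub
      have h8 : (Kᶜ : Finset (Fin (n - 1))).card = (n - 1) - K.card := by
        rw [Finset.card_compl, Fintype.card_fin]
      have h9 : K.card ≤ n - 1 := by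
        have := Finset.card_le_univ K
        rwa [Fintype.card_fin] at this
      have h10 : 1 ≤ ncomp ends AK := ncomp_pos ends AK
      rw [hV]
      rw [hPcard] at hmain
      omega
    obtain ⟨f, hinj, hmem, hcard⟩ := rado ends A hR
    have hcf : ∀ i, c (f i) = i := by
      intro i
      have := hmem i
      rw [hA, Finset.mem_filter] at this
      exact this.2
    refine ⟨Finset.univ.image f, ?_, ?_, ?_⟩
    · rw [Finset.card_image_of_injective _ hinj, Finset.card_univ, Fintype.card_fin]
    · intro a ha b hb hab
      rw [Finset.coe_image] at ha hb
      obtain ⟨i, _, hi⟩ := ha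
      obtain ⟨j, _, hj⟩ := hb
      rw [← hi, ← hj] at hab ⊢
      rw [hcf i, hcf j] at hab
      rw [hab]
    · have hle : ncomp ends (Finset.univ.image f) ≤ 1 := by
        rw [Fintype.card_fin, hV] at hcard
        omega
      exact connected_of_ncomp_le_one ends hle
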